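/- Suppose m is odd. Then f_A(x) is a permutation polynomial of F_{q^2} if and only if i·j is odd and gcd(Q1 + Q2 + 1, q − 1) = 1. -/

import Mathlib

private lemma fA_ringid {R : Type*} [CommRing R] (h2 : (2:R) = 0) (ω a A B : R)
    (hω : ω^2 = ω+1) :
    (A+ω^2)*(B+ω^2)*(a+ω^2) + (A+ω^2)*(a+ω)*(B+ω) + (B+ω^2)*(a+ω)*(A+ω)
      + (a+ω)*(A+ω)*(B+ω) + (A+ω)*(B+ω)*(a+ω^2)
    = a*A*B + ω*(a*A*B + (a+1)*(A+1)*(B+1)) := by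
  linear_combination (ω^4 + ω^3 + (a+A+B)*ω^2 + 5*ω^2 + 3*(a+A+B)*ω + 7*ω
      + 2*(a*A+a*B+A*B) + 6*(a+A+B) + 12) * hω
    + (6 + 9*ω + 3*(a+A+B) + 4*(a+A+B)*ω + (a*A+a*B+A*B) + 2*(a*A+a*B+A*B)*ω
      + 2*a*A*B - a*A*B*ω) * h2

private lemma fA_hhmul {F : Type*} [CommRing F] (Q1 Q2 : ℕ) (z v u : F) (hzv : z * v = u) :
    v^(Q1+Q2+1) * (z^(Q1+Q2) + z^(Q1+1) + z^(Q2+1) + z + 1)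
      = u^Q1*u^Q2*v + u^Q1*u*v^Q2 + u^Q2*u*v^Q1 + u*v^Q1*v^Q2 + v^Q1*v^Q2*v := by
  rw [← hzv]; ring

private lemma fA_Eval {F : Type*} [CommRing F] (Q1 Q2 : ℕ) (h2 : (2:F) = 0) (ω a : F)
    (hω : ω^2 = ω+1) (hωQ1 : ω^Q1 = ω^2) (hωQ2 : ω^Q2 = ω^2)
    (hfQ1 : ∀ x y : F, (x+y)^Q1 = x^Q1 + y^Q1)
    (hfQ2 : ∀ x y : F, (x+y)^Q2 = x^Q2 + y^Q2)
    (z : F) (hz : z * (a+ω^2) = a+ω) :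
    (a+ω^2)^(Q1+Q2+1) * (z^(Q1+Q2) + z^(Q1+1) + z^(Q2+1) + z + 1)
      = a*a^Q1*a^Q2 + ω*(a*a^Q1*a^Q2 + (a+1)*(a^Q1+1)*(a^Q2+1)) := by
  have hω3 : ω^3 = 1 := by linear_combination (ω+1)*hω + ω*h2
  have e1 : (a+ω)^Q1 = a^Q1 + ω^2 := by rw [hfQ1, hωQ1]
  have e2 : (a+ω)^Q2 = a^Q2 + ω^2 := by rw [hfQ2, hωQ2]
  have eω2Q1 : (ω^2)^Q1 = ω := by
    rw [← pow_right_comm, hωQ1]; linear_combination ω*hω3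
  have eω2Q2 : (ω^2)^Q2 = ω := by
    rw [← pow_right_comm, hωQ2]; linear_combination ω*hω3
  have e3 : (a+ω^2)^Q1 = a^Q1 + ω := by rw [hfQ1, eω2Q1]
  have e4 : (a+ω^2)^Q2 = a^Q2 + ω := by rw [hfQ2, eω2Q2]
  rw [fA_hhmul Q1 Q2 z (a+ω^2) (a+ω) hz, e1, e2, e3, e4]
  exact fA_ringid h2 ω a (a^Q1) (a^Q2) hω

private lemma fA_spow_inj {F : Type*} [Field F] (p s : ℕ) (hs0 : s ≠ 0)
    (hgcd : Nat.gcd s p = 1) (c d : F) (hc : c^(p+1) = c) (hd : d^(p+1) = d)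
    (h : c^s = d^s) : c = d := by
  rcases eq_or_ne d 0 with rfl | hd0
  · rw [zero_pow hs0] at h
    exact pow_eq_zero_iff hs0 |>.mp h
  · have hc0 : c ≠ 0 := by
      intro h0; rw [h0, zero_pow hs0] at h
      exact hd0 (pow_eq_zero_iff hs0 |>.mp h.symm)
    have hcp : c^p = 1 := by
      have : c^p * c = 1 * c := by rw [one_mul, ← pow_succ]; exact hc
      exact mul_right_cancel₀ hc0 this
    have hdp : d^p = 1 := by
      have : d^p * d = 1 * d := by rw [one_mul, ← pow_succ]; exact hd
      exact mul_right_cancel₀ hd0 this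
    set r := c * d⁻¹ with hr
    have hrs : r^s = 1 := by
      rw [hr, mul_pow, inv_pow, h, mul_inv_cancel₀ (pow_ne_zero _ hd0)]
    have hrp : r^p = 1 := by
      rw [hr, mul_pow, inv_pow, hcp, hdp, inv_one, one_mul]
    have hord : orderOf r ∣ 1 := by
      rw [← hgcd]
      exact Nat.dvd_gcd (orderOf_dvd_of_pow_eq_one hrs) (orderOf_dvd_of_pow_eq_one hrp)
    have : r = 1 := orderOf_eq_one_iff.mp (Nat.dvd_one.mp hord)
    field_simp [hr] at this
    exact (mul_inv_eq_one₀ hd0).mp this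

set_option maxHeartbeats 4000000 in
/-- Theorem A, case (i): for `m` odd, `f_A` permutes `F_{q^2}` iff `i·j` is odd
and `gcd(Q1 + Q2 + 1, q - 1) = 1`. -/
theorem fA_perm_iff_of_odd
    (m i j : ℕ) (hm : 0 < m) (hi : 0 < i) (hj : 0 < j)
    (q Q1 Q2 : ℕ) (hq : q = 2 ^ m) (hQ1 : Q1 = 2 ^ i) (hQ2 : Q2 = 2 ^ j)
    (F : Type*) [Field F] [Fintype F] (hF : Fintype.card F = q ^ 2)
    (hmo : Odd m) :
    Function.Bijective (fun x : F =>
      x ^ (q * (Q1 + Q2) + 1) + x ^ (q * (Q1 + 1) + Q2) + x ^ (q * (Q2 + 1) + Q1) +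
        x ^ (Q1 + Q2 + q) + x ^ (Q1 + Q2 + 1)) ↔
      (Odd (i * j) ∧ Nat.gcd (Q1 + Q2 + 1) (q - 1) = 1) := by
  -- char 2
  haveI : CharP F (ringChar F) := ringChar.charP F
  obtain ⟨n, hprime, hcard2⟩ := FiniteField.card F (ringChar F)
  have hchar2 : ringChar F = 2 := by
    have hd : ringChar F ∣ 2 := by
      apply Nat.Prime.dvd_of_dvd_pow (n := m * 2) hprime
      have : (ringChar F) ^ (n:ℕ) = 2 ^ (m*2) := by
        rw [← hcard2, hF, hq, ← pow_mul]
      exact this ▸ dvd_pow_self (ringChar F) (by positivity)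
    exact (Nat.prime_dvd_prime_iff_eq hprime Nat.prime_two).mp hd
  haveI hch : CharP F 2 := hchar2 ▸ ringChar.charP F
  haveI : Fact (Nat.Prime 2) := ⟨Nat.prime_two⟩
  have h2 : (2:F) = 0 := by exact_mod_cast CharP.cast_eq_zero F 2
  -- Frobenius additivity
  have hfpow : ∀ (k:ℕ) (x y : F), (x+y)^(2^k) = x^(2^k)+y^(2^k) := by
    intro k x y; exact add_pow_char_pow x y 2 k
  have hfQ1 : ∀ x y : F, (x+y)^Q1 = x^Q1 + y^Q1 := by
    intro x y; rw [hQ1]; exact hfpow i x y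
  have hfQ2 : ∀ x y : F, (x+y)^Q2 = x^Q2 + y^Q2 := by
    intro x y; rw [hQ2]; exact hfpow j x y
  have hfq : ∀ x y : F, (x+y)^q = x^q + y^q := by
    intro x y; rw [hq]; exact hfpow m x y
  -- numerics
  have hq2 : 2 ≤ q := by rw [hq]; calc 2 = 2^1 := (pow_one 2).symm
                                     _ ≤ 2^m := Nat.pow_le_pow_right (by norm_num) hm
  set p := q - 1 with hpdef
  have hqp : q = p + 1 := by omega
  set s := Q1 + Q2 + 1 with hs
  have hs0 : s ≠ 0 := by omega
  clear_value p s
  -- mod 3 facts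
  have pow2mod3 : ∀ k : ℕ, (2:ℕ)^k % 3 = if k % 2 = 0 then 1 else 2 := by
    intro k; induction k with
    | zero => norm_num
    | succ k ih =>
      rw [pow_succ, Nat.mul_mod, ih]
      rcases Nat.even_or_odd k with hk | hk
      · have h1 : k % 2 = 0 := Nat.even_iff.mp hk
        have h2 : (k+1) % 2 = 1 := by omega
        simp [h1, h2]
      · have h1 : k % 2 = 1 := Nat.odd_iff.mp hk
        have h2 : (k+1) % 2 = 0 := by omega
        simp [h1, h2]
  obtain ⟨t, ht⟩ : ∃ t, q = 3*t+2 := by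
    have := pow2mod3 m
    rw [Nat.odd_iff.mp hmo] at this
    simp at this
    rw [hq]
    refine ⟨(2^m - 2)/3, by omega⟩
  -- generator and ω
  classical
  obtain ⟨γ, hγ⟩ := IsCyclic.exists_generator (α := Fˣ)
  have hppos : 0 < p := by omega
  set X := (t+1)*p with hX
  have hXpos : 0 < X := Nat.mul_pos (by omega) hppos
  clear_value X
  have h1 : p + 2 = 3*(t+1) := by omega
  have hq2p : q^2 = 3*X+1 := by
    rw [hqp, hX]
    calc (p+1)^2 = (p+2)*p + 1 := by ring
    _ = 3*(t+1)*p + 1 := by rw [h1]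
    _ = 3*((t+1)*p) + 1 := by ring
  have hordγ : orderOf γ = 3*X := by
    rw [orderOf_eq_card_of_forall_mem_zpowers hγ, Nat.card_eq_fintype_card,
      Fintype.card_units, hF]
    omega
  set x0u : Fˣ := γ ^ (t+1) with hx0u
  set ωu : Fˣ := x0u ^ p with hωu
  set x0 : F := ((x0u : Fˣ) : F) with hx0def
  set ω : F := ((ωu : Fˣ) : F) with hωdef
  have hx0pow : x0 ^ p = ω := by
    rw [hx0def, hωdef, hωu]; push_cast; rfl
  have hx0ne : x0 ≠ 0 := Units.ne_zero x0u
  have hω3 : ω^3 = 1 := by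
    have hu : ωu^3 = 1 := by
      rw [hωu, hx0u, ← pow_mul, ← pow_mul]
      rw [show (t+1)*(p*3) = 3*X by rw [hX]; ring, ← hordγ]
      exact pow_orderOf_eq_one γ
    rw [hωdef, ← Units.val_pow_eq_pow_val, hu, Units.val_one]
  have hωne1 : ω ≠ 1 := by
    intro hcontra
    have hu1 : ωu = 1 := Units.val_eq_one.mp hcontra
    rw [hωu, hx0u, ← pow_mul] at hu1
    have hdvd : orderOf γ ∣ (t+1)*p := orderOf_dvd_of_pow_eq_one hu1
    rw [hordγ, ← hX] at hdvd
    have := Nat.le_of_dvd hXpos hdvd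
    omega
  have hω : ω^2 = ω + 1 := by
    have hfac : (ω + 1) * (ω^2 + ω + 1) = ω^3 + 1 := by
      linear_combination (ω^2+ω)*h2
    rw [hω3] at hfac
    have hne : ω + 1 ≠ 0 := by
      intro hc
      apply hωne1
      linear_combination hc - h2
    have hzero : ω^2 + ω + 1 = 0 := by
      have h20 : (1:F)+1 = 0 := by linear_combination h2
      have := mul_eq_zero.mp (by linear_combination hfac + h20 :
        (ω + 1) * (ω^2 + ω + 1) = 0)
      tauto
    linear_combination hzero - h2 - ω*h2
  -- ω powers of 2-powers
  have hωpow2 : ∀ k u : ℕ, k = 3*u+2 → ω^k = ω^2 := by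
    intro k u hk
    rw [hk, pow_add, pow_mul, hω3, one_pow, one_mul]
  have hωpow1 : ∀ k u : ℕ, k = 3*u+1 → ω^k = ω := by
    intro k u hk
    rw [hk, pow_add, pow_mul, hω3, one_pow, one_mul, pow_one]
  have hωodd : ∀ k : ℕ, Odd k → ω^(2^k) = ω^2 := by
    intro k hk
    have htmp : (2:ℕ)^k % 3 = 2 := by rw [pow2mod3 k, Nat.odd_iff.mp hk]; simp
    exact hωpow2 _ ((2^k - 2)/3) (by generalize (2:ℕ)^k = nn at htmp ⊢; omega)
  have hωeven : ∀ k : ℕ, Even k → ω^(2^k) = ω := by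
    intro k hk
    have htmp : (2:ℕ)^k % 3 = 1 := by rw [pow2mod3 k, Nat.even_iff.mp hk]; simp
    exact hωpow1 _ ((2^k - 1)/3) (by generalize (2:ℕ)^k = nn at htmp ⊢; omega)
  -- the auxiliary polynomial
  set hh : F → F := fun z => z^(Q1+Q2) + z^(Q1+1) + z^(Q2+1) + z + 1 with hhh
  clear_value hh
  have fid : ∀ x : F,
      x ^ (q * (Q1 + Q2) + 1) + x ^ (q * (Q1 + 1) + Q2) + x ^ (q * (Q2 + 1) + Q1) +
        x ^ (Q1 + Q2 + q) + x ^ s = x^s * hh (x^p) := by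
    intro x
    rw [hhh, hs, hqp]
    ring
  have hh1 : hh 1 = 1 := by
    rw [hhh]; simp only [one_pow]; linear_combination 2*h2
  have hωne0 : ω ≠ 0 := by
    intro hc; rw [hc] at hω3; simp at hω3
  have hhω0 : ¬(Odd i ∧ Odd j) → hh ω = 0 := by
    intro hno
    have e1 : ω^Q1 = ω ∨ ω^Q1 = ω^2 := by
      rcases Nat.even_or_odd i with h | h
      · exact Or.inl (by rw [hQ1]; exact hωeven i h)
      · exact Or.inr (by rw [hQ1]; exact hωodd i h)
    have e2 : ω^Q2 = ω ∨ ω^Q2 = ω^2 := by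
      rcases Nat.even_or_odd j with h | h
      · exact Or.inl (by rw [hQ2]; exact hωeven j h)
      · exact Or.inr (by rw [hQ2]; exact hωodd j h)
    have hnotboth : ω^Q1 = ω ∨ ω^Q2 = ω := by
      rcases Nat.even_or_odd i with h | h
      · exact Or.inl (by rw [hQ1]; exact hωeven i h)
      · rcases Nat.even_or_odd j with h' | h'
        · exact Or.inr (by rw [hQ2]; exact hωeven j h')
        · exact absurd ⟨h, h'⟩ hno
    rw [hhh]
    simp only []
    rw [pow_add ω Q1 Q2, pow_succ ω Q1, pow_succ ω Q2]
    rcases e1 with e1 | e1 <;> rcases e2 with e2 | e2 <;> rw [e1, e2]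
    · linear_combination 3*hω + (2*ω+2)*h2
    · linear_combination hω + (ω^3+ω+1)*h2
    · linear_combination hω + (ω^3+ω+1)*h2
    · exfalso
      rcases hnotboth with h | h
      · rw [e1] at h
        exact hωne1 (mul_left_cancel₀ hωne0 (by linear_combination h : ω*ω = ω*1))
      · rw [e2] at h
        exact hωne1 (mul_left_cancel₀ hωne0 (by linear_combination h : ω*ω = ω*1))
  -- membership in μ_{q+1}
  have hp3X : p*(q+1) = 3*X := by
    rw [hX]
    calc p*(q+1) = p*(3*(t+1)) := by rw [← h1]; rw [hqp]
    _ = 3*((t+1)*p) := by ring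
  have hzmu : ∀ x : F, x ≠ 0 → (x^p)^(q+1) = 1 := by
    intro x hx
    rw [← pow_mul, hp3X]
    have := FiniteField.pow_card_sub_one_eq_one x hx
    rwa [hF, hq2p, Nat.add_sub_cancel] at this
  -- rewrite the function
  have hfeq : (fun x : F =>
      x ^ (q * (Q1 + Q2) + 1) + x ^ (q * (Q1 + 1) + Q2) + x ^ (q * (Q2 + 1) + Q1) +
        x ^ (Q1 + Q2 + q) + x ^ s) = fun x : F => x^s * hh (x^p) :=
    funext fid
  rw [hfeq]
  constructor
  · -- forward direction
    intro hbij
    have hinj := hbij.injective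
    constructor
    · -- Odd (i*j)
      by_contra hodd
      have hno : ¬(Odd i ∧ Odd j) := fun ⟨h1', h2'⟩ => hodd (Nat.odd_mul.mpr ⟨h1', h2'⟩)
      have hhω : hh ω = 0 := hhω0 hno
      have hfx0 : x0^s * hh (x0^p) = (0:F)^s * hh ((0:F)^p) := by
        rw [hx0pow, hhω, mul_zero, zero_pow hs0, zero_mul]
      exact hx0ne (hinj hfx0)
    · -- gcd
      by_contra hgcd1
      have hdpos : 0 < Nat.gcd s p := Nat.gcd_pos_of_pos_left p (by omega)
      have hd2 : 2 ≤ Nat.gcd s p := by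
        rcases Nat.lt_or_ge (Nat.gcd s p) 2 with h | h
        · interval_cases h' : Nat.gcd s p <;> omega
        · exact h
      have hds : Nat.gcd s p ∣ s := Nat.gcd_dvd_left s p
      have hdp' : Nat.gcd s p ∣ p := Nat.gcd_dvd_right s p
      have hd3X : Nat.gcd s p ∣ 3*X := hdp'.trans ⟨3*(t+1), by rw [hX]; ring⟩
      set e := (3*X)/(Nat.gcd s p) with he
      have hed : e * Nat.gcd s p = 3*X := Nat.div_mul_cancel hd3X
      have hepos : 0 < e := by
        rcases Nat.eq_zero_or_pos e with h | h
        · rw [h, zero_mul] at hed; omega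
        · exact h
      have helt : e < 3*X := by
        rcases Nat.lt_or_ge e (3*X) with h | h
        · exact h
        · exfalso; nlinarith [hed]
      set lu : Fˣ := γ^e with hlu
      set l : F := ((lu : Fˣ) : F) with hldef
      have hlne1 : l ≠ 1 := by
        intro hc
        have : lu = 1 := Units.val_eq_one.mp hc
        rw [hlu] at this
        have hdvd := orderOf_dvd_of_pow_eq_one this
        rw [hordγ] at hdvd
        have := Nat.le_of_dvd hepos hdvd
        omega
      have hlpow : ∀ k : ℕ, Nat.gcd s p ∣ k → l^k = 1 := by
        intro k hk
        obtain ⟨c, hc⟩ := hk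
        have : lu^k = 1 := by
          rw [hlu, ← pow_mul, hc, show e*(Nat.gcd s p*c) = 3*X*c by
            rw [← hed]; ring, pow_mul, ← hordγ, pow_orderOf_eq_one, one_pow]
        rw [hldef, ← Units.val_pow_eq_pow_val, this, Units.val_one]
      have hls : l^s = 1 := hlpow s hds
      have hlp : l^p = 1 := hlpow p hdp'
      have hfl : l^s * hh (l^p) = (1:F)^s * hh ((1:F)^p) := by
        rw [hls, hlp, one_pow, one_pow]
      exact hlne1 (hinj hfl)
  · -- converse direction
    rintro ⟨hoddij, hgcd⟩
    obtain ⟨hoi, hoj⟩ := Nat.odd_mul.mp hoddij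
    have hωQ1 : ω^Q1 = ω^2 := by rw [hQ1]; exact hωodd i hoi
    have hωQ2 : ω^Q2 = ω^2 := by rw [hQ2]; exact hωodd j hoj
    have hωq : ω^q = ω^2 := by rw [hq]; exact hωodd m hmo
    have hω2q : (ω^2)^q = ω := by
      rw [← pow_right_comm, hωq]; linear_combination ω*hω3
    -- fixed field closure facts
    have hfixQ1 : ∀ x : F, x^q = x → (x^Q1)^q = x^Q1 := by
      intro x hx; rw [pow_right_comm, hx]
    have hfixQ2 : ∀ x : F, x^q = x → (x^Q2)^q = x^Q2 := by
      intro x hx; rw [pow_right_comm, hx]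
    have hfix1 : (1:F)^q = 1 := one_pow q
    -- parametrization of μ \ {1}
    have hparam : ∀ z : F, z^(q+1) = 1 → z ≠ 1 →
        ∃ a : F, a^q = a ∧ a+ω^2 ≠ 0 ∧ z*(a+ω^2) = a+ω := by
      intro z hzmu1 hz1
      have hz0 : z ≠ 0 := by
        intro hc; rw [hc, zero_pow (by omega)] at hzmu1; exact zero_ne_one hzmu1
      have hz1' : z + 1 ≠ 0 := by
        intro hc; exact hz1 (by linear_combination hc - h2)
      refine ⟨(ω + z*ω^2) * (z+1)⁻¹, ?_, ?_, ?_⟩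
      · -- fixed
        have hzq : z^q * z = 1 := by rw [← pow_succ]; rw [hqp] at hzmu1 ⊢; exact hzmu1
        have hω4 : (ω^2)^q = ω := by
          rw [← pow_right_comm, hωq]; linear_combination ω*hω3
        have hden : z^q + 1 ≠ 0 := by
          intro hc
          apply hz1'
          have : (z^q + 1)*z = 0 := by rw [hc, zero_mul]
          calc z + 1 = (z^q+1)*z + (1 - z^q*z) := by ring
          _ = 0 := by rw [this, hzq]; ring
        rw [← div_eq_mul_inv, div_pow, hfq, mul_pow, hfq, hωq, hω4, one_pow]
        rw [div_eq_div_iff hden hz1']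
        linear_combination (ω - ω^2)*hzq
      · intro hc
        have : (ω + z*ω^2) * (z+1)⁻¹ = ω^2 + 0 := by rw [add_zero]; linear_combination hc - ω^2*h2
        rw [add_zero] at this
        have h3 : ω + z*ω^2 = ω^2 * (z+1) := by
          field_simp at this
          linear_combination ω*this
        have h4 : ω = ω^2 := by linear_combination h3
        exact hωne1 (mul_left_cancel₀ hωne0 (by linear_combination - h4 : ω*ω = ω*1))
      · field_simp
        linear_combination (z^2*ω - 1)*h2
    -- N and M
    set N : F → F := fun a => a * a^Q1 * a^Q2 with hN
    set M : F → F := fun a => (a+1) * (a^Q1+1) * (a^Q2+1) with hM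
    clear_value N M
    have hNs : ∀ a : F, N a = a^s := by
      intro a; simp only [hN]; rw [hs]; ring
    have hMs : ∀ a : F, M a = (a+1)^s := by
      intro a; simp only [hM]; rw [hs]
      have hsplit : (a+1)^(Q1+Q2+1) = (a+1)^Q1*((a+1)^Q2*(a+1)) := by ring
      rw [hsplit, hfQ1 a 1, hfQ2 a 1, one_pow]
      ring
    have hNfix : ∀ a : F, a^q = a → (N a)^q = N a := by
      intro a ha; simp only [hN]
      rw [mul_pow, mul_pow, ha, hfixQ1 a ha, hfixQ2 a ha]
    have hMfix : ∀ a : F, a^q = a → (M a)^q = M a := by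
      intro a ha; simp only [hM]
      rw [mul_pow, mul_pow, hfq, hfq, hfq, ha, hfixQ1 a ha, hfixQ2 a ha, one_pow]
    have hEval : ∀ a z : F, z*(a+ω^2) = a+ω →
        (a+ω^2)^s * hh z = N a + ω*(N a + M a) := by
      intro a z hz
      simp only [hhh, hN, hM]
      rw [hs]
      exact fA_Eval Q1 Q2 h2 ω a hω hωQ1 hωQ2 hfQ1 hfQ2 z hz
    have hEconj : ∀ a : F, a^q = a →
        (N a + ω*(N a + M a))^q = N a + ω^2*(N a + M a) := by
      intro a ha
      have e1 := hfq (N a) (ω*(N a + M a))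
      have e2 : (ω*(N a + M a))^q = ω^q * ((N a)^q + (M a)^q) := by
        rw [mul_pow, hfq]
      rw [e1, e2, hNfix a ha, hMfix a ha, hωq]
    have hPne : ∀ a : F, a^q = a → N a + M a ≠ 0 := by
      intro a ha hc
      have hNM : N a = M a := by linear_combination hc - (M a)*h2
      rw [hNs, hMs] at hNM
      have ha1 : (a+1)^q = a+1 := by rw [hfq, ha, one_pow]
      have hcon := fA_spow_inj p s hs0 hgcd a (a+1)
        (by rw [← hqp]; exact ha) (by rw [← hqp]; exact ha1) hNM
      exact one_ne_zero (by linear_combination - hcon : (1:F) = 0)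
    have hEne : ∀ a : F, a^q = a → N a + ω*(N a + M a) ≠ 0 := by
      intro a ha hc
      have hcq : (N a + ω*(N a + M a))^q = 0 := by rw [hc]; exact zero_pow (by omega)
      rw [hEconj a ha] at hcq
      exact hPne a ha (by linear_combination hcq - hc - (N a + M a)*hω)
    have hhne : ∀ z : F, z^(q+1) = 1 → hh z ≠ 0 := by
      intro z hz hc
      by_cases hz1 : z = 1
      · rw [hz1, hh1] at hc; exact one_ne_zero hc
      · obtain ⟨a, ha, hva, hzv⟩ := hparam z hz hz1
        have hE := hEval a z hzv
        rw [hc, mul_zero] at hE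
        exact hEne a ha hE.symm
    have hcase1 : ∀ w : F, w^(q+1) = 1 → w ≠ 1 → hh w = w^s * (hh w)^q → False := by
      intro w hw hw1 heq
      obtain ⟨b, hb, hvb, hwv⟩ := hparam w hw hw1
      have hw0 : w ≠ 0 := by
        intro hc; rw [hc, zero_pow (by omega)] at hw; exact zero_ne_one hw
      have hub : b+ω ≠ 0 := by
        rw [← hwv]; exact mul_ne_zero hw0 hvb
      have k1 : (b+ω^2)^s * hh w = N b + ω*(N b + M b) := hEval b w hwv
      have hvbq : (b+ω^2)^q = b+ω := by rw [hfq, hb, hω2q]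
      have k2 : (b+ω)^s * (hh w)^q = N b + ω^2*(N b + M b) := by
        have hk := congrArg (·^q) k1
        simp only [mul_pow] at hk
        rw [pow_right_comm, hvbq, hEconj b hb] at hk
        exact hk
      have hwvs : w^s * (b+ω^2)^s = (b+ω)^s := by rw [← mul_pow, hwv]
      have hEE : (N b + ω*(N b + M b)) * (b+ω)^s
          = (N b + ω^2*(N b + M b)) * (b+ω)^s := by
        calc (N b + ω*(N b + M b)) * (b+ω)^s
            = ((b+ω^2)^s * hh w) * (b+ω)^s := by rw [k1]
        _ = ((b+ω^2)^s * (w^s * (hh w)^q)) * (b+ω)^s := by rw [← heq]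
        _ = (w^s * (b+ω^2)^s) * ((hh w)^q * (b+ω)^s) := by ring
        _ = (b+ω)^s * ((b+ω)^s * (hh w)^q) := by rw [hwvs]; ring
        _ = (N b + ω^2*(N b + M b)) * (b+ω)^s := by rw [mul_comm ((b+ω)^s) _, k2]
      have hEEc : N b + ω*(N b + M b) = N b + ω^2*(N b + M b) :=
        mul_right_cancel₀ (pow_ne_zero s hub) hEE
      exact hPne b hb (by linear_combination - hEEc - (N b + M b)*hω)
    have hGinj : ∀ z w : F, z^(q+1) = 1 → w^(q+1) = 1 →
        z^s * (hh z)^q * hh w = w^s * (hh w)^q * hh z → z = w := by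
      intro z w hz hw hG
      by_cases hz1 : z = 1 <;> by_cases hw1 : w = 1
      · rw [hz1, hw1]
      · exfalso
        rw [hz1, hh1] at hG
        simp only [one_pow, one_mul, mul_one] at hG
        exact hcase1 w hw hw1 hG
      · exfalso
        rw [hw1, hh1] at hG
        simp only [one_pow, one_mul, mul_one] at hG
        exact hcase1 z hz hz1 hG.symm
      · obtain ⟨a, ha, hva, hzv⟩ := hparam z hz hz1
        obtain ⟨b, hb, hvb, hwv⟩ := hparam w hw hw1
        have k1a : (a+ω^2)^s * hh z = N a + ω*(N a + M a) := hEval a z hzv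
        have hvaq : (a+ω^2)^q = a+ω := by rw [hfq, ha, hω2q]
        have k2a : (a+ω)^s * (hh z)^q = N a + ω^2*(N a + M a) := by
          have hk := congrArg (·^q) k1a
          simp only [mul_pow] at hk
          rw [pow_right_comm, hvaq, hEconj a ha] at hk
          exact hk
        have k1b : (b+ω^2)^s * hh w = N b + ω*(N b + M b) := hEval b w hwv
        have hvbq : (b+ω^2)^q = b+ω := by rw [hfq, hb, hω2q]
        have k2b : (b+ω)^s * (hh w)^q = N b + ω^2*(N b + M b) := by
          have hk := congrArg (·^q) k1b
          simp only [mul_pow] at hk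
          rw [pow_right_comm, hvbq, hEconj b hb] at hk
          exact hk
        have hzvs : z^s * (a+ω^2)^s = (a+ω)^s := by rw [← mul_pow, hzv]
        have hwvs : w^s * (b+ω^2)^s = (b+ω)^s := by rw [← mul_pow, hwv]
        have key : (N a + ω^2*(N a+M a)) * (N b + ω*(N b+M b))
            = (N b + ω^2*(N b+M b)) * (N a + ω*(N a+M a)) := by
          calc (N a + ω^2*(N a+M a)) * (N b + ω*(N b+M b))
              = ((a+ω)^s * (hh z)^q) * ((b+ω^2)^s * hh w) := by rw [k2a, k1b]
          _ = ((z^s*(a+ω^2)^s) * (hh z)^q) * ((b+ω^2)^s * hh w) := by rw [hzvs]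
          _ = (z^s * (hh z)^q * hh w) * ((a+ω^2)^s * (b+ω^2)^s) := by ring
          _ = (w^s * (hh w)^q * hh z) * ((a+ω^2)^s * (b+ω^2)^s) := by rw [hG]
          _ = ((w^s*(b+ω^2)^s) * (hh w)^q) * ((a+ω^2)^s * hh z) := by ring
          _ = ((b+ω)^s * (hh w)^q) * ((a+ω^2)^s * hh z) := by rw [hwvs]
          _ = (N b + ω^2*(N b+M b)) * (N a + ω*(N a+M a)) := by rw [k2b, k1a]
        have hNM : N a * M b = N b * M a := by
          linear_combination (-1 : F)*key - (N a*M b - N b*M a)*hω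
        rw [hNs, hNs, hMs, hMs] at hNM
        have hmulpow : (a*(b+1))^s = (b*(a+1))^s := by
          rw [mul_pow, mul_pow, hNM]
        have hfab : (a*(b+1))^(p+1) = a*(b+1) := by
          rw [← hqp, mul_pow, ha, hfq, hb, one_pow]
        have hfba : (b*(a+1))^(p+1) = b*(a+1) := by
          rw [← hqp, mul_pow, hb, hfq, ha, one_pow]
        have hab : a*(b+1) = b*(a+1) := fA_spow_inj p s hs0 hgcd _ _ hfab hfba hmulpow
        have haeb : a = b := by linear_combination hab
        rw [haeb] at hzv
        exact mul_right_cancel₀ hvb (hzv.trans hwv.symm)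
    -- final assembly
    apply Finite.injective_iff_bijective.mp
    intro x y hxy
    simp only [] at hxy
    rcases eq_or_ne x 0 with rfl | hx0'
    · rcases eq_or_ne y 0 with rfl | hy0'
      · rfl
      · exfalso
        rw [zero_pow hs0, zero_mul] at hxy
        rcases mul_eq_zero.mp hxy.symm with h | h
        · exact hy0' (pow_eq_zero_iff hs0 |>.mp h)
        · exact hhne _ (hzmu y hy0') h
    rcases eq_or_ne y 0 with rfl | hy0'
    · exfalso
      rw [zero_pow hs0, zero_mul] at hxy
      rcases mul_eq_zero.mp hxy with h | h
      · exact hx0' (pow_eq_zero_iff hs0 |>.mp h)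
      · exact hhne _ (hzmu x hx0') h
    have hzx := hzmu x hx0'
    have hzy := hzmu y hy0'
    have hq' := congrArg (·^q) hxy
    simp only [mul_pow] at hq'
    have hxs : (x^s)^q = x^s * (x^p)^s := by
      rw [← pow_mul, ← pow_mul, ← pow_add]
      congr 1
      rw [hqp]; ring
    have hys : (y^s)^q = y^s * (y^p)^s := by
      rw [← pow_mul, ← pow_mul, ← pow_add]
      congr 1
      rw [hqp]; ring
    have hcross : (x^s * (x^p)^s * (hh (x^p))^q) * (y^s * hh (y^p))
        = (y^s * (y^p)^s * (hh (y^p))^q) * (x^s * hh (x^p)) := by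
      calc (x^s * (x^p)^s * (hh (x^p))^q) * (y^s * hh (y^p))
          = ((x^s)^q * (hh (x^p))^q) * (y^s * hh (y^p)) := by rw [hxs]
      _ = ((y^s)^q * (hh (y^p))^q) * (x^s * hh (x^p)) := by rw [hq', ← hxy]
      _ = (y^s * (y^p)^s * (hh (y^p))^q) * (x^s * hh (x^p)) := by rw [hys]
    have hGG : (x^p)^s * (hh (x^p))^q * hh (y^p)
        = (y^p)^s * (hh (y^p))^q * hh (x^p) := by
      have hcancel : (x^s*y^s) * ((x^p)^s * (hh (x^p))^q * hh (y^p))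
          = (x^s*y^s) * ((y^p)^s * (hh (y^p))^q * hh (x^p)) := by
        linear_combination hcross
      exact mul_left_cancel₀
        (mul_ne_zero (pow_ne_zero _ hx0') (pow_ne_zero _ hy0')) hcancel
    have hzw := hGinj _ _ hzx hzy hGG
    rw [hzw] at hxy
    have hxys : x^s = y^s := mul_right_cancel₀ (hhne _ hzy) hxy
    have hrs : (x*y⁻¹)^s = 1 := by
      rw [mul_pow, inv_pow, hxys, mul_inv_cancel₀ (pow_ne_zero _ hy0')]
    have hrp : (x*y⁻¹)^p = 1 := by
      rw [mul_pow, inv_pow, hzw, mul_inv_cancel₀ (pow_ne_zero _ hy0')]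
    have hord : orderOf (x*y⁻¹) ∣ 1 := by
      rw [← hgcd]
      exact Nat.dvd_gcd (orderOf_dvd_of_pow_eq_one hrs) (orderOf_dvd_of_pow_eq_one hrp)
    have hone : x*y⁻¹ = 1 := orderOf_eq_one_iff.mp (Nat.dvd_one.mp hord)
    field_simp at hone
    exact hone
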